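/- View the Lefschetz pair [a,b] (with 1 ≤ a ≤ b ≤ ℓ) as the permutation of {1,…,ℓ} sending each x with a ≤ x ≤ b to a+b−x and fixing all other indices. A list of Lefschetz pairs ([a₁,b₁],…,[a_p,b_p]) determines a wiring diagram in which every two wires intersect exactly once if and only if the composite permutation [a_p,b_p]∘⋯∘[a₁,b₁] equals the order-reversing permutation J : x ↦ ℓ+1−x, and the total crossing count Σᵢ C(bᵢ−aᵢ+1, 2) equals C(ℓ,2). -/

import Mathlib

/-- The block-reversal (Lefschetz pair) permutation `[a,b]`:
`x ↦ a + b - x` for `a ≤ x ≤ b`, identity elsewhere. -/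
def lefschetzRev (a b x : ℕ) : ℕ := if a ≤ x ∧ x ≤ b then a + b - x else x

/-- Apply a list of Lefschetz pairs, first pair first. -/
def applyLefschetzList (ps : List (ℕ × ℕ)) (x : ℕ) : ℕ :=
  ps.foldl (fun y pr => lefschetzRev pr.1 pr.2 y) x

/-- Wires `j` and `j'` cross at event `i` of the list `ps`: just before event `i`,
the positions of both wires lie in the reversed block `[aᵢ, bᵢ]`. -/
def crossAt (ps : List (ℕ × ℕ)) (i : Fin ps.length) (j j' : ℕ) : Prop :=
  (ps.get i).1 ≤ applyLefschetzList (ps.take i) j ∧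
    applyLefschetzList (ps.take i) j ≤ (ps.get i).2 ∧
    (ps.get i).1 ≤ applyLefschetzList (ps.take i) j' ∧
    applyLefschetzList (ps.take i) j' ≤ (ps.get i).2

instance crossAt.dec (ps : List (ℕ × ℕ)) (i : Fin ps.length) (j j' : ℕ) :
    Decidable (crossAt ps i j j') := by unfold crossAt; infer_instance

lemma lefschetzRev_invol (a b x : ℕ) : lefschetzRev a b (lefschetzRev a b x) = x := by
  unfold lefschetzRev
  by_cases h : a ≤ x ∧ x ≤ b
  · rw [if_pos h, if_pos (by omega)]; omega
  · rw [if_neg h, if_neg h]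

lemma lefschetzRev_inj (a b : ℕ) : Function.Injective (lefschetzRev a b) := by
  intro x y h
  have := lefschetzRev_invol a b x
  rw [h, lefschetzRev_invol] at this
  exact this.symm

lemma lefschetzRev_mem {ℓ a b x : ℕ} (ha : 1 ≤ a) (hb : b ≤ ℓ)
    (hx1 : 1 ≤ x) (hx2 : x ≤ ℓ) : 1 ≤ lefschetzRev a b x ∧ lefschetzRev a b x ≤ ℓ := by
  unfold lefschetzRev; split <;> omega

lemma lefschetzRev_lt_of_both {a b x x' : ℕ} (hxx : x < x')
    (h : a ≤ x ∧ x ≤ b ∧ a ≤ x' ∧ x' ≤ b) :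
    lefschetzRev a b x' < lefschetzRev a b x := by
  unfold lefschetzRev; rw [if_pos ⟨h.2.2.1, h.2.2.2⟩, if_pos ⟨h.1, h.2.1⟩]; omega

lemma lefschetzRev_lt_of_not_both {a b x x' : ℕ} (hab : a ≤ b) (hxx : x < x')
    (h : ¬(a ≤ x ∧ x ≤ b ∧ a ≤ x' ∧ x' ≤ b)) :
    lefschetzRev a b x < lefschetzRev a b x' := by
  unfold lefschetzRev; split <;> split <;> omega

@[simp] lemma apply_nil (x : ℕ) : applyLefschetzList [] x = x := rfl

@[simp] lemma apply_cons (pr : ℕ × ℕ) (ps : List (ℕ × ℕ)) (x : ℕ) :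
    applyLefschetzList (pr :: ps) x = applyLefschetzList ps (lefschetzRev pr.1 pr.2 x) := rfl

lemma apply_inj (ps : List (ℕ × ℕ)) : Function.Injective (applyLefschetzList ps) := by
  induction ps with
  | nil => exact fun x y h => h
  | cons pr ps ih =>
    intro x y h
    simp only [apply_cons] at h
    exact lefschetzRev_inj _ _ (ih h)

lemma apply_mem {ℓ : ℕ} {ps : List (ℕ × ℕ)}
    (hps : ∀ pr ∈ ps, 1 ≤ pr.1 ∧ pr.1 ≤ pr.2 ∧ pr.2 ≤ ℓ) {x : ℕ}
    (hx1 : 1 ≤ x) (hx2 : x ≤ ℓ) :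
    1 ≤ applyLefschetzList ps x ∧ applyLefschetzList ps x ≤ ℓ := by
  induction ps generalizing x with
  | nil => exact ⟨hx1, hx2⟩
  | cons pr ps ih =>
    obtain ⟨h1, _, h3⟩ := hps pr (by simp)
    have := lefschetzRev_mem (a := pr.1) (b := pr.2) h1 h3 hx1 hx2
    exact ih (fun q hq => hps q (by simp [hq])) this.1 this.2

/-- Number of crossings of wires `j`, `j'`. -/
def crossNum (ps : List (ℕ × ℕ)) (j j' : ℕ) : ℕ :=
  (Finset.univ.filter fun i : Fin ps.length => crossAt ps i j j').card

lemma crossAt_zero (pr : ℕ × ℕ) (ps : List (ℕ × ℕ)) (j j' : ℕ) :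
    crossAt (pr :: ps) (0 : Fin (ps.length + 1)) j j' ↔
      (pr.1 ≤ j ∧ j ≤ pr.2 ∧ pr.1 ≤ j' ∧ j' ≤ pr.2) := by
  simp [crossAt, applyLefschetzList]

lemma crossAt_succ (pr : ℕ × ℕ) (ps : List (ℕ × ℕ)) (i : Fin ps.length) (j j' : ℕ) :
    crossAt (pr :: ps) i.succ j j' ↔
      crossAt ps i (lefschetzRev pr.1 pr.2 j) (lefschetzRev pr.1 pr.2 j') := by
  simp [crossAt, List.take_succ_cons]

lemma crossNum_cons (pr : ℕ × ℕ) (ps : List (ℕ × ℕ)) (j j' : ℕ) :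
    crossNum (pr :: ps) j j' =
      (if pr.1 ≤ j ∧ j ≤ pr.2 ∧ pr.1 ≤ j' ∧ j' ≤ pr.2 then 1 else 0) +
        crossNum ps (lefschetzRev pr.1 pr.2 j) (lefschetzRev pr.1 pr.2 j') := by
  unfold crossNum
  rw [Finset.card_filter, Finset.card_filter]
  show (∑ i : Fin (ps.length + 1), if crossAt (pr :: ps) i j j' then 1 else 0) = _
  rw [Fin.sum_univ_succ]
  rw [if_congr (crossAt_zero pr ps j j') rfl rfl]
  congr 1

lemma crossNum_comm (ps : List (ℕ × ℕ)) (j j' : ℕ) :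
    crossNum ps j j' = crossNum ps j' j := by
  unfold crossNum
  congr 1
  apply Finset.filter_congr
  intro i _
  unfold crossAt
  constructor <;> (intro h; tauto)

lemma parity (ps : List (ℕ × ℕ)) (hps : ∀ pr ∈ ps, pr.1 ≤ pr.2) {x x' : ℕ} (hxx : x < x') :
    (applyLefschetzList ps x < applyLefschetzList ps x' ↔ Even (crossNum ps x x')) := by
  induction ps generalizing x x' with
  | nil => simpa [crossNum] using hxx
  | cons pr ps ih =>
    have hab : pr.1 ≤ pr.2 := hps pr (by simp)
    have hps' : ∀ q ∈ ps, q.1 ≤ q.2 := fun q hq => hps q (by simp [hq])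
    rw [crossNum_cons]
    by_cases h : pr.1 ≤ x ∧ x ≤ pr.2 ∧ pr.1 ≤ x' ∧ x' ≤ pr.2
    · rw [if_pos h]
      have hlt := lefschetzRev_lt_of_both hxx h
      have h2 := ih hps' hlt
      have hne : applyLefschetzList ps (lefschetzRev pr.1 pr.2 x) ≠
          applyLefschetzList ps (lefschetzRev pr.1 pr.2 x') := by
        intro hc
        exact absurd (lefschetzRev_inj _ _ (apply_inj ps hc)) (Nat.ne_of_lt hxx)
      rw [crossNum_comm ps (lefschetzRev pr.1 pr.2 x')] at h2
      simp only [apply_cons]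
      constructor
      · intro hlt'
        rw [Nat.add_comm, Nat.even_add_one]
        intro he
        exact absurd (h2.mpr he) (by omega)
      · intro he
        rw [Nat.add_comm, Nat.even_add_one] at he
        rcases Nat.lt_trichotomy (applyLefschetzList ps (lefschetzRev pr.1 pr.2 x))
          (applyLefschetzList ps (lefschetzRev pr.1 pr.2 x')) with hh | hh | hh
        · exact hh
        · exact absurd hh hne
        · exact absurd (h2.mp hh) he
    · rw [if_neg h, Nat.zero_add]
      have hlt := lefschetzRev_lt_of_not_both hab hxx h
      simpa only [apply_cons] using ih hps' hlt

lemma apply_image {ℓ : ℕ} {ps : List (ℕ × ℕ)}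
    (hps : ∀ pr ∈ ps, 1 ≤ pr.1 ∧ pr.1 ≤ pr.2 ∧ pr.2 ≤ ℓ) :
    (Finset.Icc 1 ℓ).image (applyLefschetzList ps) = Finset.Icc 1 ℓ := by
  apply Finset.eq_of_subset_of_card_le
  · intro y hy
    simp only [Finset.mem_image, Finset.mem_Icc] at hy ⊢
    obtain ⟨x, hx, rfl⟩ := hy
    exact apply_mem hps hx.1 hx.2
  · rw [Finset.card_image_of_injective _ (apply_inj ps)]

lemma block_filter_card {ℓ a b : ℕ} {ps : List (ℕ × ℕ)}
    (hps : ∀ pr ∈ ps, 1 ≤ pr.1 ∧ pr.1 ≤ pr.2 ∧ pr.2 ≤ ℓ)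
    (ha : 1 ≤ a) (hab : a ≤ b) (hb : b ≤ ℓ) :
    ((Finset.Icc 1 ℓ).filter fun x =>
        a ≤ applyLefschetzList ps x ∧ applyLefschetzList ps x ≤ b).card = b - a + 1 := by
  have h1 : ((Finset.Icc 1 ℓ).filter fun x =>
      a ≤ applyLefschetzList ps x ∧ applyLefschetzList ps x ≤ b).card
      = (((Finset.Icc 1 ℓ).image (applyLefschetzList ps)).filter fun y => a ≤ y ∧ y ≤ b).card := by
    rw [Finset.filter_image, Finset.card_image_of_injective _ (apply_inj ps)]
  rw [h1, apply_image hps]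
  have h2 : ((Finset.Icc 1 ℓ).filter fun y => a ≤ y ∧ y ≤ b) = Finset.Icc a b := by
    ext y; simp only [Finset.mem_filter, Finset.mem_Icc]; omega
  rw [h2, Nat.card_Icc]; omega

lemma pairs_card (S : Finset ℕ) :
    ((S ×ˢ S).filter fun p => p.1 < p.2).card = S.card.choose 2 := by
  have hswap : ((S ×ˢ S).filter fun p => p.1 < p.2).card
      = ((S ×ˢ S).filter fun p => p.2 < p.1).card := by
    apply Finset.card_bij' (fun p _ => (p.2, p.1)) (fun p _ => (p.2, p.1)) <;>
      simp +contextual [Finset.mem_filter, Finset.mem_product, and_comm]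
  have hsplit : (((S ×ˢ S).filter fun p => ¬ p.1 < p.2).filter fun p => p.2 < p.1)
      = (S ×ˢ S).filter fun p => p.2 < p.1 := by
    rw [Finset.filter_filter]
    apply Finset.filter_congr
    intro p _
    constructor
    · exact fun h => h.2
    · exact fun h => ⟨by omega, h⟩
  have hdiag : (((S ×ˢ S).filter fun p => ¬ p.1 < p.2).filter fun p => ¬ p.2 < p.1)
      = S.diag := by
    ext p
    simp only [Finset.mem_filter, Finset.mem_product, Finset.mem_diag]
    constructor
    · rintro ⟨⟨⟨h1, h2⟩, h3⟩, h4⟩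
      refine ⟨h1, by omega⟩
    · rintro ⟨h1, h2⟩
      exact ⟨⟨⟨h1, h2 ▸ h1⟩, by omega⟩, by omega⟩
  have hA := Finset.card_filter_add_card_filter_not
    (s := S ×ˢ S) (fun p : ℕ × ℕ => p.1 < p.2)
  have hB := Finset.card_filter_add_card_filter_not
    (s := (S ×ˢ S).filter fun p => ¬ p.1 < p.2) (fun p : ℕ × ℕ => p.2 < p.1)
  rw [hsplit, hdiag, Finset.diag_card] at hB
  rw [Finset.card_product] at hA
  have hch : S.card.choose 2 = S.card * (S.card - 1) / 2 := Nat.choose_two_right S.card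
  have hdvd : 2 * (S.card * (S.card - 1) / 2) = S.card * (S.card - 1) :=
    Nat.two_mul_div_two_of_even (Nat.even_mul_pred_self S.card)
  have hmm : S.card * S.card = S.card * (S.card - 1) + S.card := by
    cases S.card with
    | zero => rfl
    | succ n => simp [Nat.succ_sub_one]; ring
  omega

/-- The set of pairs of wires. -/
def pairsSet (ℓ : ℕ) : Finset (ℕ × ℕ) :=
  (Finset.Icc 1 ℓ ×ˢ Finset.Icc 1 ℓ).filter fun p => p.1 < p.2

lemma total_count {ℓ : ℕ} {ps : List (ℕ × ℕ)}
    (hps : ∀ pr ∈ ps, 1 ≤ pr.1 ∧ pr.1 ≤ pr.2 ∧ pr.2 ≤ ℓ) :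
    ∑ p ∈ pairsSet ℓ, crossNum ps p.1 p.2
      = (ps.map fun pr => Nat.choose (pr.2 - pr.1 + 1) 2).sum := by
  have hmap : (ps.map fun pr => Nat.choose (pr.2 - pr.1 + 1) 2).sum
      = ∑ i : Fin ps.length, Nat.choose ((ps.get i).2 - (ps.get i).1 + 1) 2 := by
    conv_lhs => rw [← List.ofFn_get ps]
    rw [List.map_ofFn, List.sum_ofFn]
    simp
  rw [hmap]
  unfold crossNum
  simp_rw [Finset.card_filter]
  rw [Finset.sum_comm]
  apply Finset.sum_congr rfl
  intro i _
  -- count pairs whose positions are both in block i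
  set f := applyLefschetzList (ps.take i) with hf
  have hget : ps.get i ∈ ps := ps.get_mem i
  obtain ⟨ha, hab, hb⟩ := hps _ hget
  set a := (ps.get i).1
  set b := (ps.get i).2
  have htake : ∀ pr ∈ ps.take i, 1 ≤ pr.1 ∧ pr.1 ≤ pr.2 ∧ pr.2 ≤ ℓ :=
    fun pr hpr => hps pr (List.take_subset _ _ hpr)
  set T := (Finset.Icc 1 ℓ).filter fun x => a ≤ f x ∧ f x ≤ b with hT
  have hTcard : T.card = b - a + 1 := block_filter_card htake ha hab hb
  have hEq : (pairsSet ℓ).filter (fun p => crossAt ps i p.1 p.2)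
      = (T ×ˢ T).filter fun p => p.1 < p.2 := by
    ext p
    simp only [Finset.mem_filter, Finset.mem_product, hT]
    simp only [pairsSet, crossAt, Finset.mem_filter, Finset.mem_product]
    constructor
    · rintro ⟨⟨⟨h1, h2⟩, h3⟩, h4⟩
      exact ⟨⟨⟨h1, h4.1, h4.2.1⟩, ⟨h2, h4.2.2.1, h4.2.2.2⟩⟩, h3⟩
    · rintro ⟨⟨⟨h1, h4, h5⟩, ⟨h2, h6, h7⟩⟩, h3⟩
      exact ⟨⟨⟨h1, h2⟩, h3⟩, h4, h5, h6, h7⟩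
  calc (∑ p ∈ pairsSet ℓ, if crossAt ps i p.1 p.2 then 1 else 0)
      = ((pairsSet ℓ).filter (fun p => crossAt ps i p.1 p.2)).card :=
        (Finset.card_filter _ _).symm
    _ = ((T ×ˢ T).filter fun p => p.1 < p.2).card := by rw [hEq]
    _ = T.card.choose 2 := pairs_card T
    _ = Nat.choose (b - a + 1) 2 := by rw [hTcard]

lemma exu_iff (ps : List (ℕ × ℕ)) (j j' : ℕ) :
    (∃! i : Fin ps.length, crossAt ps i j j') ↔ crossNum ps j j' = 1 := by
  rw [crossNum, Finset.card_eq_one]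
  constructor
  · rintro ⟨a, ha, hu⟩
    refine ⟨a, ?_⟩
    ext b
    simp only [Finset.mem_filter, Finset.mem_univ, true_and, Finset.mem_singleton]
    exact ⟨fun h => hu b h, fun h => h ▸ ha⟩
  · rintro ⟨a, ha⟩
    have h1 : crossAt ps a j j' := by
      have : a ∈ Finset.univ.filter fun i => crossAt ps i j j' := ha ▸ Finset.mem_singleton_self a
      exact (Finset.mem_filter.mp this).2
    refine ⟨a, h1, fun b hb => ?_⟩
    have : b ∈ Finset.univ.filter fun i => crossAt ps i j j' := by
      simp [Finset.mem_filter, hb]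
    rw [ha, Finset.mem_singleton] at this
    exact this

lemma antitone_eq_J {ℓ : ℕ} {ps : List (ℕ × ℕ)}
    (hps : ∀ pr ∈ ps, 1 ≤ pr.1 ∧ pr.1 ≤ pr.2 ∧ pr.2 ≤ ℓ)
    (hanti : ∀ j j', 1 ≤ j → j < j' → j' ≤ ℓ →
      applyLefschetzList ps j' < applyLefschetzList ps j)
    {j : ℕ} (hj1 : 1 ≤ j) (hj2 : j ≤ ℓ) :
    applyLefschetzList ps j = ℓ + 1 - j := by
  have hfilter : ((Finset.Icc 1 ℓ).filter fun x =>
      applyLefschetzList ps j ≤ applyLefschetzList ps x) = Finset.Icc 1 j := by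
    ext x
    simp only [Finset.mem_filter, Finset.mem_Icc]
    constructor
    · rintro ⟨⟨h1, h2⟩, h3⟩
      refine ⟨h1, ?_⟩
      by_contra hc
      have := hanti j x hj1 (by omega) h2
      omega
    · rintro ⟨h1, h2⟩
      refine ⟨⟨h1, by omega⟩, ?_⟩
      rcases Nat.lt_or_ge x j with h | h
      · exact le_of_lt (hanti x j h1 h hj2)
      · have : x = j := by omega
        rw [this]
  have hcard1 : ((Finset.Icc 1 ℓ).filter fun x =>
      applyLefschetzList ps j ≤ applyLefschetzList ps x).card = j := by
    rw [hfilter, Nat.card_Icc]; omega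
  have hb := apply_mem hps hj1 hj2
  have hcard2 : ((Finset.Icc 1 ℓ).filter fun x =>
      applyLefschetzList ps j ≤ applyLefschetzList ps x).card
      = ℓ + 1 - applyLefschetzList ps j := by
    have h1 : ((Finset.Icc 1 ℓ).filter fun x =>
        applyLefschetzList ps j ≤ applyLefschetzList ps x).card
        = (((Finset.Icc 1 ℓ).image (applyLefschetzList ps)).filter
            fun y => applyLefschetzList ps j ≤ y).card := by
      rw [Finset.filter_image, Finset.card_image_of_injective _ (apply_inj ps)]
    rw [h1, apply_image hps]
    have h2 : ((Finset.Icc 1 ℓ).filter fun y => applyLefschetzList ps j ≤ y)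
        = Finset.Icc (applyLefschetzList ps j) ℓ := by
      ext y
      simp only [Finset.mem_filter, Finset.mem_Icc]
      omega
    rw [h2, Nat.card_Icc]
  omega

lemma pairsSet_mem {ℓ : ℕ} {p : ℕ × ℕ} :
    p ∈ pairsSet ℓ ↔ 1 ≤ p.1 ∧ p.1 < p.2 ∧ p.2 ≤ ℓ := by
  simp only [pairsSet, Finset.mem_filter, Finset.mem_product, Finset.mem_Icc]
  omega

lemma pairsSet_card (ℓ : ℕ) : (pairsSet ℓ).card = ℓ.choose 2 := by
  rw [pairsSet, pairs_card, Nat.card_Icc]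
  norm_num

theorem wiring_unique_intersection_iff (ℓ : ℕ) (ps : List (ℕ × ℕ))
    (hps : ∀ pr ∈ ps, 1 ≤ pr.1 ∧ pr.1 ≤ pr.2 ∧ pr.2 ≤ ℓ) :
    (∀ j j', 1 ≤ j → j < j' → j' ≤ ℓ → ∃! i : Fin ps.length, crossAt ps i j j')
      ↔ ((∀ j, 1 ≤ j → j ≤ ℓ → applyLefschetzList ps j = ℓ + 1 - j) ∧
        (ps.map fun pr => Nat.choose (pr.2 - pr.1 + 1) 2).sum = Nat.choose ℓ 2) := by
  have hps' : ∀ pr ∈ ps, pr.1 ≤ pr.2 := fun pr hpr => (hps pr hpr).2.1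
  constructor
  · intro H
    have hone : ∀ p ∈ pairsSet ℓ, crossNum ps p.1 p.2 = 1 := by
      intro p hp
      rw [pairsSet_mem] at hp
      exact (exu_iff ps p.1 p.2).mp (H p.1 p.2 hp.1 hp.2.1 hp.2.2)
    have hanti : ∀ j j', 1 ≤ j → j < j' → j' ≤ ℓ →
        applyLefschetzList ps j' < applyLefschetzList ps j := by
      intro j j' h1 h2 h3
      have hcn : crossNum ps j j' = 1 := hone (j, j') (pairsSet_mem.mpr ⟨h1, h2, h3⟩)
      have hpar := parity ps hps' h2
      rw [hcn] at hpar
      have hne : applyLefschetzList ps j ≠ applyLefschetzList ps j' :=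
        fun hc => absurd (apply_inj ps hc) (by omega)
      have : ¬ (applyLefschetzList ps j < applyLefschetzList ps j') := by
        rw [hpar]; exact Nat.not_even_one
      omega
    refine ⟨fun j hj1 hj2 => antitone_eq_J hps hanti hj1 hj2, ?_⟩
    rw [← total_count hps]
    rw [Finset.sum_congr rfl hone, Finset.sum_const, Nat.smul_one_eq_cast,
      Nat.cast_id, pairsSet_card]
  · rintro ⟨hJ, hsum⟩ j j' h1 h2 h3
    have hge : ∀ p ∈ pairsSet ℓ, 1 ≤ crossNum ps p.1 p.2 := by
      intro p hp
      rw [pairsSet_mem] at hp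
      have hv1 := hJ p.1 hp.1 (by omega)
      have hv2 := hJ p.2 (by omega) hp.2.2
      have hlt : applyLefschetzList ps p.2 < applyLefschetzList ps p.1 := by
        rw [hv1, hv2]; omega
      have hpar := parity ps hps' hp.2.1
      have : ¬ Even (crossNum ps p.1 p.2) := by
        rw [← hpar]; omega
      rcases Nat.eq_zero_or_pos (crossNum ps p.1 p.2) with h | h
      · exact absurd (h ▸ Even.zero) this
      · exact h
    have htot : ∑ p ∈ pairsSet ℓ, (1 : ℕ) = ∑ p ∈ pairsSet ℓ, crossNum ps p.1 p.2 := by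
      rw [total_count hps, hsum, Finset.sum_const, Nat.smul_one_eq_cast,
        Nat.cast_id, pairsSet_card]
    have hall := (Finset.sum_eq_sum_iff_of_le hge).mp htot
    exact (exu_iff ps j j').mpr
      ((hall (j, j') (pairsSet_mem.mpr ⟨h1, h2, h3⟩)).symm)
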